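/- For any invertible real 2×2 matrix Q and any diagonal real 2×2 matrix Λ with nonnegative diagonal entries, the numerical radius of Q Λ Q^{−1} equals (1/2) ‖Q Λ Q^{−1} + Q^{−T} Λ Q^T‖, where Q^{−T} denotes the transpose of the inverse of Q. -/

import Mathlib

open Matrix

/-- The numerical radius of a complex square matrix:
`w(M) = sup { |vᴴ M v| : ‖v‖ ≤ 1 }` (Euclidean norm). -/
noncomputable def numRadius {d : ℕ} (M : Matrix (Fin d) (Fin d) ℂ) : ℝ :=
  sSup {r : ℝ | ∃ v : EuclideanSpace ℂ (Fin d), ‖v‖ ≤ 1 ∧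
    r = ‖(star ((WithLp.equiv 2 (Fin d → ℂ)) v) ⬝ᵥ
          M.mulVec ((WithLp.equiv 2 (Fin d → ℂ)) v))‖}

/-- Spectral norm (operator 2-norm) of a real square matrix. -/
noncomputable def specNorm {d : ℕ} (A : Matrix (Fin d) (Fin d) ℝ) : ℝ :=
  ‖Matrix.toEuclideanCLM (𝕜 := ℝ) A‖

set_option maxHeartbeats 1000000 in
lemma core_ineq (a b c d t P Q R I : ℝ) (h1 : 0 ≤ a + d) (ht : 0 ≤ t)
    (ht2 : t^2 = (a-d)^2 + (b+c)^2)
    (hf : (b-c)^2 ≤ t^2)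
    (hP : 0 ≤ P) (hQ : 0 ≤ Q) (hPQ : P + Q ≤ 1)
    (hRI : R^2 + I^2 = P*Q) :
    (a*P + d*Q + (b+c)*R)^2 + ((b-c)*I)^2 ≤ ((a+d+t)/2)^2 := by
  have hσ0 : 0 ≤ P + Q := by positivity
  have h_id : (P-Q)^2 + 4*R^2 + 4*I^2 = (P+Q)^2 := by nlinarith [hRI]
  have h_cs : ((a-d)*(P-Q) + 2*(b+c)*R)^2 ≤ t^2*((P-Q)^2+4*R^2) := by
    nlinarith [sq_nonneg ((a-d)*(2*R) - (b+c)*(P-Q))]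
  have h_k : ((a-d)*(P-Q) + 2*(b+c)*R)^2 + 4*((b-c)*I)^2 ≤ t^2*(P+Q)^2 := by
    nlinarith [sq_nonneg I]
  have h_kle : (a-d)*(P-Q) + 2*(b+c)*R ≤ t*(P+Q) := by
    nlinarith [sq_nonneg ((b-c)*I), mul_nonneg ht hσ0,
      sq_nonneg ((a-d)*(P-Q) + 2*(b+c)*R + t*(P+Q))]
  have hst : 0 ≤ (a+d)+t := add_nonneg h1 ht
  have hs1 : ((a+d)+t)*(P+Q) ≤ ((a+d)+t)*1 := mul_le_mul_of_nonneg_left hPQ hst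
  have hs2 : 0 ≤ ((a+d)+t)*(P+Q) := mul_nonneg hst hσ0
  have hsq : (((a+d)+t)*(P+Q))^2 ≤ ((a+d)+t)^2 := by
    have := mul_self_le_mul_self hs2 (by linarith : ((a+d)+t)*(P+Q) ≤ (a+d)+t)
    nlinarith [this]
  have h3 : ((a+d)*(P+Q) + ((a-d)*(P-Q) + 2*(b+c)*R))^2 + 4*((b-c)*I)^2
      ≤ (((a+d)+t)*(P+Q))^2 := by
    nlinarith [mul_nonneg (mul_nonneg h1 hσ0) (sub_nonneg.mpr h_kle)]
  nlinarith [h3, hsq]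

set_option maxHeartbeats 1000000 in
lemma spec_ub_ineq (a d e t x y : ℝ) (h1 : 0 ≤ a+d) (ht : 0 ≤ t)
    (ht2 : t^2 = (a-d)^2 + e^2) :
    (2*a*x + e*y)^2 + (e*x + 2*d*y)^2 ≤ ((a+d)+t)^2 * (x^2+y^2) := by
  have hv : 0 ≤ x^2 + y^2 := by positivity
  have hcs : ((a-d)*(x^2-y^2) + e*(2*x*y))^2 ≤ t^2*(x^2+y^2)^2 := by
    nlinarith [sq_nonneg ((a-d)*(2*x*y) - e*(x^2-y^2))]
  have hray : 2*a*x^2 + 2*d*y^2 + 2*e*x*y ≤ ((a+d)+t)*(x^2+y^2) := by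
    nlinarith [mul_nonneg ht hv, sq_nonneg ((a-d)*(x^2-y^2) + e*(2*x*y) - t*(x^2+y^2)),
      sq_nonneg ((a-d)*(x^2-y^2) + e*(2*x*y) + t*(x^2+y^2))]
  nlinarith [mul_nonneg h1 (sub_nonneg.mpr hray), mul_nonneg (mul_nonneg ht ht) (mul_nonneg hv hv),
    mul_nonneg h1 hv, sq_nonneg (x^2+y^2)]

lemma exists_eigen (a d e t : ℝ) (ht : 0 ≤ t) (ht2 : t^2 = (a-d)^2 + e^2) :
    ∃ x y : ℝ, x^2 + y^2 = 1 ∧ a*x + (e/2)*y = ((a+d+t)/2)*x ∧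
      (e/2)*x + d*y = ((a+d+t)/2)*y := by
  by_cases h : t + a - d = 0
  · have he : e = 0 := by nlinarith [ht2]
    refine ⟨0, 1, by norm_num, by simp [he], ?_⟩
    have : t = d - a := by linarith
    rw [he, this]; ring_nf
  · set n := Real.sqrt ((t+a-d)^2 + e^2) with hn
    have hn2 : n^2 = (t+a-d)^2 + e^2 := Real.sq_sqrt (by positivity)
    have hnpos : 0 < n := by
      rw [hn]; apply Real.sqrt_pos.mpr; positivity
    refine ⟨(t+a-d)/n, e/n, ?_, ?_, ?_⟩
    · field_simp; linarith [hn2]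
    · field_simp; nlinarith [ht2]
    · field_simp; nlinarith [ht2]


set_option maxHeartbeats 4000000 in
lemma numRadius_fin_two (a b c d t : ℝ) (h1 : 0 ≤ a+d) (ht : 0 ≤ t)
    (ht2 : t^2 = (a-d)^2 + (b+c)^2) (hf : (b-c)^2 ≤ t^2) :
    numRadius ((!![a,b;c,d]).map Complex.ofReal) = (a+d+t)/2 := by
  have hm0 : 0 ≤ (a+d+t)/2 := by linarith
  -- upper bound for every element of the set
  have hub : ∀ r ∈ {r : ℝ | ∃ v : EuclideanSpace ℂ (Fin 2), ‖v‖ ≤ 1 ∧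
      r = ‖(star ((WithLp.equiv 2 (Fin 2 → ℂ)) v) ⬝ᵥ
        ((!![a,b;c,d]).map Complex.ofReal).mulVec ((WithLp.equiv 2 (Fin 2 → ℂ)) v))‖},
      r ≤ (a+d+t)/2 := by
    rintro r ⟨v, hv, rfl⟩
    have hz : (star ((WithLp.equiv 2 (Fin 2 → ℂ)) v) ⬝ᵥ
        ((!![a,b;c,d]).map Complex.ofReal).mulVec ((WithLp.equiv 2 (Fin 2 → ℂ)) v))
        = (starRingEnd ℂ) (v 0) * (a * v 0 + b * v 1)
          + (starRingEnd ℂ) (v 1) * (c * v 0 + d * v 1) := by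
      simp [dotProduct, Matrix.mulVec, Fin.sum_univ_two, Matrix.map_apply,
        Matrix.vecHead, Matrix.vecTail, Pi.star_apply, Complex.star_def]
    rw [hz]
    set z := (starRingEnd ℂ) (v 0) * (a * v 0 + b * v 1)
          + (starRingEnd ℂ) (v 1) * (c * v 0 + d * v 1) with hzdef
    have hre : z.re = a*((v 0).re^2+(v 0).im^2) + d*((v 1).re^2+(v 1).im^2)
        + (b+c)*((v 0).re*(v 1).re + (v 0).im*(v 1).im) := by
      simp [hzdef, Complex.add_re, Complex.mul_re, Complex.mul_im]
      ring
    have him : z.im = (b-c)*((v 0).re*(v 1).im - (v 0).im*(v 1).re) := by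
      simp [hzdef, Complex.add_im, Complex.mul_re, Complex.mul_im]
      ring
    have hnorm : (v 0).re^2+(v 0).im^2 + ((v 1).re^2+(v 1).im^2) ≤ 1 := by
      have h := EuclideanSpace.norm_eq v
      rw [Fin.sum_univ_two] at h
      have h0 : (v 0).re^2+(v 0).im^2 + ((v 1).re^2+(v 1).im^2) = ‖v‖^2 := by
        rw [h, Real.sq_sqrt (by positivity)]
        simp [Complex.sq_norm, Complex.normSq_apply]
        ring
      rw [h0]
      nlinarith [norm_nonneg v]
    have hkey := core_ineq a b c d t ((v 0).re^2+(v 0).im^2) ((v 1).re^2+(v 1).im^2)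
      ((v 0).re*(v 1).re + (v 0).im*(v 1).im) ((v 0).re*(v 1).im - (v 0).im*(v 1).re)
      h1 ht ht2 hf (by positivity) (by positivity) hnorm (by ring)
    rw [Complex.norm_def, Complex.normSq_apply]
    calc Real.sqrt (z.re*z.re + z.im*z.im) ≤ Real.sqrt (((a+d+t)/2)^2) := by
          apply Real.sqrt_le_sqrt; rw [hre, him]; nlinarith [hkey]
      _ = (a+d+t)/2 := Real.sqrt_sq hm0
  -- the value is attained
  obtain ⟨x, y, hxy, he1, he2⟩ := exists_eigen a d (b+c) t ht ht2
  have hmem : (a+d+t)/2 ∈ {r : ℝ | ∃ v : EuclideanSpace ℂ (Fin 2), ‖v‖ ≤ 1 ∧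
      r = ‖(star ((WithLp.equiv 2 (Fin 2 → ℂ)) v) ⬝ᵥ
        ((!![a,b;c,d]).map Complex.ofReal).mulVec ((WithLp.equiv 2 (Fin 2 → ℂ)) v))‖} := by
    refine ⟨(WithLp.equiv 2 (Fin 2 → ℂ)).symm ![(x:ℂ), (y:ℂ)], ?_, ?_⟩
    · rw [EuclideanSpace.norm_eq, Fin.sum_univ_two]
      simp only [WithLp.equiv_symm_apply, PiLp.toLp_apply, Matrix.cons_val_zero, Matrix.cons_val_one,
        Matrix.head_cons, Complex.norm_real, Real.norm_eq_abs]
      rw [show |x|^2 + |y|^2 = 1 by rw [sq_abs, sq_abs]; exact hxy]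
      simp
    · have hz : (star ((WithLp.equiv 2 (Fin 2 → ℂ)) ((WithLp.equiv 2 (Fin 2 → ℂ)).symm ![(x:ℂ), (y:ℂ)])) ⬝ᵥ
          ((!![a,b;c,d]).map Complex.ofReal).mulVec
            ((WithLp.equiv 2 (Fin 2 → ℂ)) ((WithLp.equiv 2 (Fin 2 → ℂ)).symm ![(x:ℂ), (y:ℂ)])))
          = ((a*x^2 + d*y^2 + (b+c)*(x*y) : ℝ) : ℂ) := by
        rw [Equiv.apply_symm_apply]
        simp [dotProduct, Matrix.mulVec, Fin.sum_univ_two, Matrix.map_apply,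
          Matrix.vecHead, Matrix.vecTail, Pi.star_apply, Complex.star_def]
        ring
      rw [hz]
      rw [Complex.norm_real, Real.norm_eq_abs]
      have hval : a*x^2 + d*y^2 + (b+c)*(x*y) = (a+d+t)/2 := by
        have e1 : (a*x + ((b+c)/2)*y)*x = (((a+d+t)/2)*x)*x := by rw [he1]
        have e2 : (((b+c)/2)*x + d*y)*y = (((a+d+t)/2)*y)*y := by rw [he2]
        nlinarith [e1, e2, hxy]
      rw [hval, abs_of_nonneg hm0]
  unfold numRadius
  exact le_antisymm (csSup_le ⟨_, hmem⟩ hub) (le_csSup ⟨_, hub⟩ hmem)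

set_option maxHeartbeats 4000000 in
lemma specNorm_fin_two (a d e t : ℝ) (h1 : 0 ≤ a+d) (ht : 0 ≤ t)
    (ht2 : t^2 = (a-d)^2 + e^2) :
    specNorm !![2*a, e; e, 2*d] = (a+d)+t := by
  have hst : 0 ≤ (a+d)+t := add_nonneg h1 ht
  have happ : ∀ (w : EuclideanSpace ℝ (Fin 2)) (i : Fin 2),
      (Matrix.toEuclideanCLM (𝕜 := ℝ) !![2*a, e; e, 2*d]) w i
        = (!![2*a, e; e, 2*d]).mulVec w i := fun w i => rfl
  apply le_antisymm
  · apply ContinuousLinearMap.opNorm_le_bound _ hst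
    intro v
    have hv2 : ‖v‖ = Real.sqrt ((v 0)^2 + (v 1)^2) := by
      rw [EuclideanSpace.norm_eq, Fin.sum_univ_two]
      simp [Real.norm_eq_abs, sq_abs]
    have hTv : ‖(Matrix.toEuclideanCLM (𝕜 := ℝ) !![2*a, e; e, 2*d]) v‖
        = Real.sqrt ((2*a*(v 0) + e*(v 1))^2 + (e*(v 0) + 2*d*(v 1))^2) := by
      rw [EuclideanSpace.norm_eq, Fin.sum_univ_two, happ, happ]
      simp [Matrix.mulVec, dotProduct, Fin.sum_univ_two, Real.norm_eq_abs, sq_abs,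
        Matrix.vecHead, Matrix.vecTail]
    rw [hTv, hv2]
    rw [show ((a+d)+t) * Real.sqrt ((v 0)^2 + (v 1)^2)
        = Real.sqrt (((a+d)+t)^2 * ((v 0)^2 + (v 1)^2)) by
      rw [Real.sqrt_mul (by positivity), Real.sqrt_sq hst]]
    exact Real.sqrt_le_sqrt (spec_ub_ineq a d e t (v 0) (v 1) h1 ht ht2)
  · obtain ⟨x, y, hxy, he1, he2⟩ := exists_eigen a d e t ht ht2
    set v : EuclideanSpace ℝ (Fin 2) := (WithLp.equiv 2 (Fin 2 → ℝ)).symm ![x, y] with hv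
    have hvnorm : ‖v‖ = 1 := by
      rw [EuclideanSpace.norm_eq, Fin.sum_univ_two]
      simp only [hv, WithLp.equiv_symm_apply, PiLp.toLp_apply, Matrix.cons_val_zero, Matrix.cons_val_one,
        Matrix.head_cons, Real.norm_eq_abs, sq_abs]
      rw [hxy]; simp
    have hTv : ‖(Matrix.toEuclideanCLM (𝕜 := ℝ) !![2*a, e; e, 2*d]) v‖ = (a+d)+t := by
      rw [EuclideanSpace.norm_eq, Fin.sum_univ_two, happ, happ]
      have hc0 : (!![2*a, e; e, 2*d]).mulVec v 0 = ((a+d)+t)*x := by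
        simp [hv, Matrix.mulVec, dotProduct, Fin.sum_univ_two]
        linarith [he1]
      have hc1 : (!![2*a, e; e, 2*d]).mulVec v 1 = ((a+d)+t)*y := by
        simp [hv, Matrix.mulVec, dotProduct, Fin.sum_univ_two]
        linarith [he2]
      rw [hc0, hc1]
      simp only [Real.norm_eq_abs, sq_abs]
      rw [show (((a+d)+t)*x)^2 + (((a+d)+t)*y)^2 = ((a+d)+t)^2 * (x^2+y^2) by ring, hxy]
      rw [mul_one, Real.sqrt_sq hst]
    calc (a+d)+t = ‖(Matrix.toEuclideanCLM (𝕜 := ℝ) !![2*a, e; e, 2*d]) v‖ := hTv.symm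
      _ ≤ ‖Matrix.toEuclideanCLM (𝕜 := ℝ) !![2*a, e; e, 2*d]‖ := by
          simpa [hvnorm] using
            (Matrix.toEuclideanCLM (𝕜 := ℝ) !![2*a, e; e, 2*d]).unit_le_opNorm v (le_of_eq hvnorm)

set_option maxHeartbeats 4000000 in
/-- For any invertible real 2×2 matrix Q and diagonal Λ with nonnegative entries,
the numerical radius of QΛQ⁻¹ equals (1/2)‖QΛQ⁻¹ + Q⁻ᵀΛQᵀ‖. -/
theorem statement6 (Q Λ : Matrix (Fin 2) (Fin 2) ℝ) (hQ : IsUnit Q)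
    (hΛdiag : Λ.IsDiag) (hΛnonneg : ∀ i, 0 ≤ Λ i i) :
    numRadius ((Q * Λ * Q⁻¹).map (Complex.ofReal)) =
      (1 / 2 : ℝ) * specNorm (Q * Λ * Q⁻¹ + (Q⁻¹)ᵀ * Λ * Qᵀ) := by
  have hQd : IsUnit Q.det := (Matrix.isUnit_iff_isUnit_det Q).mp hQ
  have hinv : Q⁻¹ * Q = 1 := Matrix.nonsing_inv_mul Q hQd
  set A := Q * Λ * Q⁻¹ with hA
  set a := A 0 0 with ha
  set b := A 0 1 with hb
  set c := A 1 0 with hc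
  set d := A 1 1 with hd
  have hΛsymm : Λᵀ = Λ := by
    ext i j
    by_cases h : i = j
    · subst h; simp
    · rw [Matrix.transpose_apply, hΛdiag (Ne.symm h), hΛdiag h]
  have hT : Aᵀ = (Q⁻¹)ᵀ * Λ * Qᵀ := by
    rw [hA, Matrix.transpose_mul, Matrix.transpose_mul, hΛsymm, ← Matrix.mul_assoc]
  have htr : A.trace = Λ.trace := by
    rw [hA, Matrix.trace_mul_comm, ← Matrix.mul_assoc, hinv, Matrix.one_mul]
  have hdet : A.det = Λ.det := by
    rw [hA, Matrix.det_mul, Matrix.det_mul, Matrix.det_nonsing_inv]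
    rw [Ring.inverse_eq_inv']
    have : Q.det ≠ 0 := hQd.ne_zero
    field_simp
  have e1 : a + d = Λ 0 0 + Λ 1 1 := by
    have := htr
    rw [Matrix.trace_fin_two, Matrix.trace_fin_two] at this
    exact this
  have e2 : a*d - b*c = Λ 0 0 * Λ 1 1 := by
    have := hdet
    rw [Matrix.det_fin_two, Matrix.det_fin_two] at this
    rw [hΛdiag (by decide : (0:Fin 2) ≠ 1)] at this
    simpa using this
  have h1 : 0 ≤ a + d := by
    rw [e1]; exact add_nonneg (hΛnonneg 0) (hΛnonneg 1)
  have hdisc : 0 ≤ (a-d)^2 + 4*(b*c) := by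
    nlinarith [sq_nonneg (Λ 0 0 - Λ 1 1), e1, e2]
  set t := Real.sqrt ((a-d)^2 + (b+c)^2) with htdef
  have ht : 0 ≤ t := Real.sqrt_nonneg _
  have ht2 : t^2 = (a-d)^2 + (b+c)^2 := Real.sq_sqrt (by positivity)
  have hf : (b-c)^2 ≤ t^2 := by rw [ht2]; nlinarith [hdisc]
  have hAeta : A = !![a,b;c,d] := by
    rw [ha, hb, hc, hd]; exact Matrix.eta_fin_two A
  have hsum : A + (Q⁻¹)ᵀ * Λ * Qᵀ = !![2*a, b+c; b+c, 2*d] := by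
    rw [← hT, hAeta]
    ext i j
    fin_cases i <;> fin_cases j <;>
      simp only [Matrix.add_apply, Matrix.transpose_apply] <;> simp <;> ring
  rw [hsum, hAeta]
  rw [numRadius_fin_two a b c d t h1 ht ht2 hf, specNorm_fin_two a d (b+c) t h1 ht ht2]
  ring
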